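/- Let δ > 0 and define the doubled smoothed ramp loss L : ℝ → ℝ by L(u) = 0 for u ≤ −δ, L(u) = (1 + u/δ)² for −δ < u ≤ 0, L(u) = 2 − (1 − u/δ)² for 0 < u < δ, and L(u) = 2 for u ≥ δ; define sign(t) = 1 if t ≥ 0 and sign(t) = −1 if t < 0. Let (Ω, ℱ, P) be a probability space, 𝒳 a measurable space, X : Ω → 𝒳 measurable, A : Ω → {−1, 1} a random variable, Y : Ω → ℝ a random variable with 0 ≤ Y ≤ h almost surely for some h > 0, and Δ : Ω → {0, 1} a random variable. Let π : {−1,1} × 𝒳 → ℝ be measurable with η ≤ π(a, x) ≤ 1 for all (a, x) and some η > 0, such that for each a ∈ {−1, 1}, ω ↦ π(a, X(ω)) is a version of P(A = a ∣ σ(X)). Let S̃ : ℝ × 𝒳 × {−1,1} → ℝ be measurable with η_C ≤ S̃ ≤ 1 for some η_C > 0, and fix γ ∈ (0,1). For measurable f : 𝒳 → ℝ and α ∈ ℝ set V'_L(f, α) = E[(αγ − Δ·(α − Y)·1{Y ≤ α}/S̃(Y, X, A)) · L(A·f(X))/π(A, X)], and for measurable d : 𝒳 → {−1, 1} and α ∈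 ℝ set V'(d, α) = E[(αγ − Δ·(α − Y)·1{Y ≤ α}/S̃(Y, X, A)) · 1{A = d(X)}/π(A, X)]. If a measurable f̃ : 𝒳 → ℝ and α̃ ∈ ℝ satisfy V'_L(f̃, α̃) ≥ V'_L(f, α) for every measurable f : 𝒳 → ℝ and every α ∈ ℝ, then V'(sign∘f̃, α̃) ≥ V'(d, α) for every measurable d : 𝒳 → {−1, 1} and every α ∈ ℝ. -/

import Mathlib

open MeasureTheory

/-- The doubled smoothed ramp loss: `L(u) = 0` for `u ≤ -δ`, `(1+u/δ)²` for `-δ < u ≤ 0`,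
`2 - (1-u/δ)²` for `0 < u < δ`, and `2` for `u ≥ δ`. -/
noncomputable def rampL (δ u : ℝ) : ℝ :=
  if u ≤ -δ then 0
  else if u ≤ 0 then (1 + u / δ) ^ 2
  else if u < δ then 2 - (1 - u / δ) ^ 2
  else 2

lemma rampL_nonneg {δ : ℝ} (hδ : 0 < δ) (u : ℝ) : 0 ≤ rampL δ u := by
  unfold rampL
  split_ifs with h1 h2 h3
  · exact le_rfl
  · positivity
  · have h4 : 0 < u / δ := div_pos (by linarith) hδ
    have h5 : u / δ < 1 := (div_lt_one hδ).2 h3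
    nlinarith
  · norm_num

lemma rampL_le_two {δ : ℝ} (hδ : 0 < δ) (u : ℝ) : rampL δ u ≤ 2 := by
  unfold rampL
  split_ifs with h1 h2 h3
  · norm_num
  · have h4 : -1 < u / δ := by
      rw [neg_lt, ← neg_div]; exact (div_lt_one hδ).2 (by linarith)
    have h5 : u / δ ≤ 0 := div_nonpos_iff.2 (Or.inr ⟨h2, hδ.le⟩)
    nlinarith
  · nlinarith [sq_nonneg (1 - u / δ)]
  · exact le_rfl

lemma rampL_zero {δ : ℝ} (hδ : 0 < δ) : rampL δ 0 = 1 := by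
  unfold rampL
  rw [if_neg (by linarith), if_pos le_rfl]
  norm_num

lemma rampL_neg {δ : ℝ} (hδ : 0 < δ) (u : ℝ) : rampL δ (-u) = 2 - rampL δ u := by
  rcases lt_trichotomy u 0 with hu | rfl | hu
  · unfold rampL
    split_ifs <;>
      first
        | (exfalso; linarith)
        | ring
  · rw [neg_zero, rampL_zero hδ]; norm_num
  · unfold rampL
    split_ifs <;>
      first
        | (exfalso; linarith)
        | ring

lemma rampL_self {δ : ℝ} (hδ : 0 < δ) : rampL δ δ = 2 := by
  unfold rampL; split_ifs <;> linarith

lemma rampL_neg_self {δ : ℝ} (hδ : 0 < δ) : rampL δ (-δ) = 0 := by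
  unfold rampL; split_ifs <;> linarith

lemma rampL_le_one {δ u : ℝ} (hδ : 0 < δ) (hu : u ≤ 0) : rampL δ u ≤ 1 := by
  by_cases h1 : u ≤ -δ
  · rw [rampL, if_pos h1]; norm_num
  · rw [rampL, if_neg h1, if_pos hu]
    have h4 : -1 < u / δ := by
      rw [neg_lt, ← neg_div]; exact (div_lt_one hδ).2 (by linarith)
    have h5 : u / δ ≤ 0 := div_nonpos_iff.2 (Or.inr ⟨hu, hδ.le⟩)
    nlinarith

lemma one_le_rampL {δ u : ℝ} (hδ : 0 < δ) (hu : 0 ≤ u) : 1 ≤ rampL δ u := by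
  by_cases h2 : u ≤ 0
  · have h0 : u = 0 := le_antisymm h2 hu
    rw [h0, rampL_zero hδ]
  · rw [rampL, if_neg (by linarith), if_neg h2]
    by_cases h3 : u < δ
    · rw [if_pos h3]
      have h4 : 0 < u / δ := div_pos (by linarith) hδ
      have h5 : u / δ < 1 := (div_lt_one hδ).2 h3
      nlinarith
    · rw [if_neg h3]; norm_num

lemma measurable_rampL (δ : ℝ) : Measurable (rampL δ) := by
  unfold rampL
  apply Measurable.ite (measurableSet_le measurable_id measurable_const) measurable_const
  apply Measurable.ite (measurableSet_le measurable_id measurable_const) (by fun_prop)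
  exact Measurable.ite (measurableSet_lt measurable_id measurable_const) (by fun_prop) (by fun_prop)

/-- `sgn t = 1` if `t ≥ 0` and `-1` if `t < 0`. -/
noncomputable def sgn (t : ℝ) : ℝ := if 0 ≤ t then 1 else -1

lemma measurable_sgn : Measurable sgn := by
  unfold sgn
  exact Measurable.ite (measurableSet_le measurable_const measurable_id)
    measurable_const measurable_const

lemma sgn_val (t : ℝ) : sgn t = 1 ∨ sgn t = -1 := by
  unfold sgn; split_ifs
  · exact Or.inl rfl
  · exact Or.inr rfl

/-- Surrogate CVaR-criterion value
`V'_L(f, α) = E[(αγ - Δ(α-Y)1{Y≤α}/S̃(Y,X,A)) · L(A f(X)) / π(A,X)]`. -/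
noncomputable def VLcvar {Ω 𝒳 : Type*} [MeasurableSpace Ω] [MeasurableSpace 𝒳]
    (P : Measure Ω) (X : Ω → 𝒳) (A Y Δc : Ω → ℝ) (S : ℝ × 𝒳 × ℝ → ℝ) (π : ℝ × 𝒳 → ℝ)
    (γ δ : ℝ) (f : 𝒳 → ℝ) (α : ℝ) : ℝ :=
  ∫ ω, (α * γ - Δc ω * (α - Y ω) * (if Y ω ≤ α then (1 : ℝ) else 0) / S (Y ω, X ω, A ω))
      * rampL δ (A ω * f (X ω)) / π (A ω, X ω) ∂P

/-- CVaR-criterion value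
`V'(d, α) = E[(αγ - Δ(α-Y)1{Y≤α}/S̃(Y,X,A)) · 1{A = d(X)} / π(A,X)]`. -/
noncomputable def Vcvar {Ω 𝒳 : Type*} [MeasurableSpace Ω] [MeasurableSpace 𝒳]
    (P : Measure Ω) (X : Ω → 𝒳) (A Y Δc : Ω → ℝ) (S : ℝ × 𝒳 × ℝ → ℝ) (π : ℝ × 𝒳 → ℝ)
    (γ : ℝ) (d : 𝒳 → ℝ) (α : ℝ) : ℝ :=
  ∫ ω, (α * γ - Δc ω * (α - Y ω) * (if Y ω ≤ α then (1 : ℝ) else 0) / S (Y ω, X ω, A ω))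
      * (if A ω = d (X ω) then (1 : ℝ) else 0) / π (A ω, X ω) ∂P

/-- Theorem 1 of the paper: Fisher consistency of the surrogate loss for the
CVaR criterion. If `(f̃, α̃)` maximizes the surrogate value `V'_L` over measurable `f` and
`α ∈ ℝ`, then `(sign ∘ f̃, α̃)` maximizes `V'` over measurable rules `d : 𝒳 → {-1,1}` and
`α ∈ ℝ`. -/
theorem stmt_7 {Ω 𝒳 : Type*} [MeasurableSpace Ω] [MeasurableSpace 𝒳]
    (P : Measure Ω) [IsProbabilityMeasure P]
    (X : Ω → 𝒳) (hX : Measurable X)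
    (A : Ω → ℝ) (hA : Measurable A) (hAval : ∀ ω, A ω = 1 ∨ A ω = -1)
    (Y : Ω → ℝ) (hY : Measurable Y)
    (h : ℝ) (hh : 0 < h) (hYb : ∀ᵐ ω ∂P, 0 ≤ Y ω ∧ Y ω ≤ h)
    (Δc : Ω → ℝ) (hΔm : Measurable Δc) (hΔval : ∀ ω, Δc ω = 0 ∨ Δc ω = 1)
    (π : ℝ × 𝒳 → ℝ) (hπ : Measurable π) (η : ℝ) (hη : 0 < η)
    (hπb : ∀ a x, η ≤ π (a, x) ∧ π (a, x) ≤ 1)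
    (hπver : ∀ a : ℝ, (a = 1 ∨ a = -1) →
      (fun ω => π (a, X ω)) =ᵐ[P]
        P[fun ω => if A ω = a then (1 : ℝ) else 0 |
          MeasurableSpace.comap X inferInstance])
    (S : ℝ × 𝒳 × ℝ → ℝ) (hS : Measurable S) (ηC : ℝ) (hηC : 0 < ηC)
    (hSb : ∀ t x a, ηC ≤ S (t, x, a) ∧ S (t, x, a) ≤ 1)
    (γ : ℝ) (hγ : γ ∈ Set.Ioo (0 : ℝ) 1)
    (δ : ℝ) (hδ : 0 < δ)
    (ftilde : 𝒳 → ℝ) (hftilde : Measurable ftilde) (αtilde : ℝ)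
    (hopt : ∀ f : 𝒳 → ℝ, Measurable f → ∀ α : ℝ,
      VLcvar P X A Y Δc S π γ δ f α ≤ VLcvar P X A Y Δc S π γ δ ftilde αtilde) :
    ∀ d : 𝒳 → ℝ, Measurable d → (∀ x, d x = 1 ∨ d x = -1) → ∀ α : ℝ,
      Vcvar P X A Y Δc S π γ d α
        ≤ Vcvar P X A Y Δc S π γ (fun x => sgn (ftilde x)) αtilde := by
  classical
  intro d hd hdval α
  have hπpos : ∀ a x, 0 < π (a, x) := fun a x => lt_of_lt_of_le hη (hπb a x).1
  have hSpos : ∀ t x a, 0 < S (t, x, a) := fun t x a => lt_of_lt_of_le hηC (hSb t x a).1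
  have hAabs : ∀ ω, |A ω| = 1 := fun ω => by rcases hAval ω with h'|h' <;> rw [h'] <;> norm_num
  -- Step 1: for ±1-valued rules, `2 * V'(d', α) = V'_L(δ d', α)`.
  have hVc : ∀ (d' : 𝒳 → ℝ), (∀ x, d' x = 1 ∨ d' x = -1) → ∀ α' : ℝ,
      2 * Vcvar P X A Y Δc S π γ d' α'
        = VLcvar P X A Y Δc S π γ δ (fun x => δ * d' x) α' := by
    intro d' hd' α'
    unfold Vcvar VLcvar
    rw [← integral_const_mul]
    refine integral_congr_ae (Filter.Eventually.of_forall fun ω => ?_)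
    simp only
    rcases hAval ω with h1|h1 <;> rcases hd' (X ω) with h2|h2 <;>
        simp only [h1, h2] <;> norm_num [rampL_self hδ, rampL_neg_self hδ] <;> ring
  -- the weight W and the signed weight G
  set W : Ω → ℝ := fun ω =>
    (αtilde * γ - Δc ω * (αtilde - Y ω) * (if Y ω ≤ αtilde then (1 : ℝ) else 0)
      / S (Y ω, X ω, A ω)) / π (A ω, X ω) with hW_def
  set G : Ω → ℝ := fun ω => W ω * A ω with hG_def
  have hW_meas : Measurable W := by
    simp only [hW_def]
    apply Measurable.div ?_ (hπ.comp (hA.prodMk hX))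
    apply Measurable.sub measurable_const
    apply Measurable.div ?_ (hS.comp (hY.prodMk (hX.prodMk hA)))
    exact (hΔm.mul (measurable_const.sub hY)).mul
      (Measurable.ite (measurableSet_le hY measurable_const) measurable_const measurable_const)
  have hG_meas : Measurable G := hW_meas.mul hA
  -- boundedness of W
  set Cb : ℝ := (|αtilde| * γ + (|αtilde| + h) / ηC) / η with hCb_def
  have hCb_nonneg : 0 ≤ Cb := by
    simp only [hCb_def]
    have : (0:ℝ) ≤ |αtilde| * γ := mul_nonneg (abs_nonneg _) hγ.1.le
    have : (0:ℝ) ≤ (|αtilde| + h) / ηC := div_nonneg (by positivity) hηC.le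
    positivity
  have hW_bdd : ∀ᵐ ω ∂P, |W ω| ≤ Cb := by
    filter_upwards [hYb] with ω hYω
    obtain ⟨hY0, hYh⟩ := hYω
    have hterm : |Δc ω * (αtilde - Y ω) * (if Y ω ≤ αtilde then (1:ℝ) else 0)
        / S (Y ω, X ω, A ω)| ≤ (|αtilde| + h) / ηC := by
      rw [abs_div, abs_of_pos (hSpos _ _ _)]
      refine div_le_div₀ (by positivity) ?_ hηC (hSb _ _ _).1
      rw [abs_mul, abs_mul]
      have e1 : |Δc ω| ≤ 1 := by rcases hΔval ω with h'|h' <;> rw [h'] <;> norm_num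
      have e2 : |αtilde - Y ω| ≤ |αtilde| + h := by
        have t1 : |αtilde - Y ω| ≤ |αtilde| + |Y ω| := abs_sub _ _
        have t2 : |Y ω| ≤ h := by rw [abs_of_nonneg hY0]; exact hYh
        linarith
      have e3 : |(if Y ω ≤ αtilde then (1:ℝ) else 0)| ≤ 1 := by split_ifs <;> norm_num
      calc |Δc ω| * |αtilde - Y ω| * |(if Y ω ≤ αtilde then (1:ℝ) else 0)|
          ≤ 1 * (|αtilde| + h) * 1 := by
            apply mul_le_mul (mul_le_mul e1 e2 (abs_nonneg _) (by norm_num)) e3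
              (abs_nonneg _) (by positivity)
        _ = |αtilde| + h := by ring
    have hnum : |αtilde * γ - Δc ω * (αtilde - Y ω) * (if Y ω ≤ αtilde then (1:ℝ) else 0)
        / S (Y ω, X ω, A ω)| ≤ |αtilde| * γ + (|αtilde| + h) / ηC := by
      have t1 := abs_sub (αtilde * γ)
        (Δc ω * (αtilde - Y ω) * (if Y ω ≤ αtilde then (1:ℝ) else 0) / S (Y ω, X ω, A ω))
      rw [abs_mul, abs_of_pos hγ.1] at t1
      linarith
    simp only [hW_def]
    rw [abs_div, abs_of_pos (hπpos _ _), hCb_def]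
    exact div_le_div₀ (by linarith [abs_nonneg (αtilde * γ - Δc ω * (αtilde - Y ω) *
      (if Y ω ≤ αtilde then (1:ℝ) else 0) / S (Y ω, X ω, A ω))]) hnum hη (hπb _ _).1
  have hG_bdd : ∀ᵐ ω ∂P, |G ω| ≤ Cb := by
    filter_upwards [hW_bdd] with ω hω
    simp only [hG_def]
    rw [abs_mul, hAabs ω, mul_one]; exact hω
  -- integrability of bounded measurable functions
  have hint : ∀ (g : Ω → ℝ), Measurable g → ∀ (c : ℝ), (∀ᵐ ω ∂P, |g ω| ≤ c) →
      Integrable g P := by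
    intro g hg c hc
    exact ⟨hg.aestronglyMeasurable,
      HasFiniteIntegral.of_bounded (C := c) (by simpa [Real.norm_eq_abs] using hc)⟩
  have hGint : Integrable G P := hint G hG_meas Cb hG_bdd
  -- conditional expectation of G given X
  have hm' : MeasurableSpace.comap X inferInstance ≤ (inferInstance : MeasurableSpace Ω) :=
    measurable_iff_comap_le.mp hX
  set φ : Ω → ℝ := P[G | MeasurableSpace.comap X inferInstance] with hφ_def
  have hφint : Integrable φ P := integrable_condExp
  have hφsm : StronglyMeasurable[MeasurableSpace.comap X inferInstance] φ :=
    stronglyMeasurable_condExp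
  -- pull-out property
  have hpull : ∀ g : 𝒳 → ℝ, Measurable g → (∀ x, |g x| ≤ 2) →
      ∫ ω, g (X ω) * G ω ∂P = ∫ ω, g (X ω) * φ ω ∂P := by
    intro g hg hgb
    have hgX : Measurable[MeasurableSpace.comap X inferInstance] fun ω => g (X ω) :=
      hg.comp (Measurable.of_comap_le le_rfl)
    have h1 : StronglyMeasurable[MeasurableSpace.comap X inferInstance] fun ω => g (X ω) :=
      hgX.stronglyMeasurable
    have h2 : Integrable (fun ω => g (X ω) * G ω) P := by
      refine hint _ ((hg.comp hX).mul hG_meas) (2 * Cb) ?_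
      filter_upwards [hG_bdd] with ω hω
      rw [abs_mul]
      exact mul_le_mul (hgb _) hω (abs_nonneg _) (by norm_num)
    have h3 := condExp_mul_of_stronglyMeasurable_left h1 h2 hGint
    calc ∫ ω, g (X ω) * G ω ∂P
        = ∫ ω, (P[(fun ω => g (X ω)) * G | MeasurableSpace.comap X inferInstance]) ω ∂P :=
          (integral_condExp (f := (fun ω => g (X ω)) * G) hm').symm
      _ = ∫ ω, ((fun ω => g (X ω)) * φ) ω ∂P := integral_congr_ae h3
      _ = ∫ ω, g (X ω) * φ ω ∂P := rfl
  -- rewriting V'_L at αtilde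
  have hintegrand : ∀ f : 𝒳 → ℝ, VLcvar P X A Y Δc S π γ δ f αtilde
      = ∫ ω, W ω * rampL δ (A ω * f (X ω)) ∂P := by
    intro f
    unfold VLcvar
    refine integral_congr_ae (Filter.Eventually.of_forall fun ω => ?_)
    simp only [hW_def]; ring
  have hWA_int : Integrable (fun ω => W ω * (1 - A ω)) P := by
    refine hint _ (hW_meas.mul (measurable_const.sub hA)) (Cb * 2) ?_
    filter_upwards [hW_bdd] with ω hω
    rw [abs_mul]
    have : |1 - A ω| ≤ 2 := by rcases hAval ω with h'|h' <;> rw [h'] <;> norm_num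
    exact mul_le_mul hω this (abs_nonneg _) hCb_nonneg
  have hramp_abs : ∀ (f : 𝒳 → ℝ) (x : 𝒳), |rampL δ (f x)| ≤ 2 := fun f x => by
    rw [abs_le]
    constructor
    · linarith [rampL_nonneg hδ (f x)]
    · exact rampL_le_two hδ (f x)
  have hrint : ∀ f : 𝒳 → ℝ, Measurable f →
      Integrable (fun ω => rampL δ (f (X ω)) * G ω) P := by
    intro f hf
    refine hint _ (((measurable_rampL δ).comp (hf.comp hX)).mul hG_meas) (2 * Cb) ?_
    filter_upwards [hG_bdd] with ω hω
    rw [abs_mul]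
    exact mul_le_mul (hramp_abs f (X ω)) hω (abs_nonneg _) (by norm_num)
  have hdecomp : ∀ f : 𝒳 → ℝ, Measurable f → VLcvar P X A Y Δc S π γ δ f αtilde
      = (∫ ω, W ω * (1 - A ω) ∂P) + ∫ ω, rampL δ (f (X ω)) * G ω ∂P := by
    intro f hf
    rw [hintegrand f]
    rw [show (∫ ω, W ω * rampL δ (A ω * f (X ω)) ∂P)
        = ∫ ω, (W ω * (1 - A ω) + rampL δ (f (X ω)) * G ω) ∂P from
      integral_congr_ae (Filter.Eventually.of_forall fun ω => by
        simp only [hG_def]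
        rcases hAval ω with h1|h1 <;> rw [h1]
        · rw [one_mul]; ring
        · rw [neg_one_mul, rampL_neg hδ]; ring)]
    exact integral_add hWA_int (hrint f hf)
  -- the maximizing rule from the positivity set of φ
  have hset : MeasurableSet[MeasurableSpace.comap X inferInstance] {ω | 0 ≤ φ ω} :=
    measurableSet_le measurable_const hφsm.measurable
  obtain ⟨B, hBmeas, hBpre⟩ := MeasurableSpace.measurableSet_comap.mp hset
  set fstar : 𝒳 → ℝ := fun x => if x ∈ B then δ else -δ with hfstar_def
  have hfstar_meas : Measurable fstar := by
    simp only [hfstar_def]; exact Measurable.ite hBmeas measurable_const measurable_const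
  have hmemB : ∀ ω, X ω ∈ B ↔ 0 ≤ φ ω := fun ω => by
    constructor
    · intro hx
      have : ω ∈ X ⁻¹' B := hx
      rw [hBpre] at this; exact this
    · intro hx
      have : ω ∈ X ⁻¹' B := by rw [hBpre]; exact hx
      exact this
  have hfstar_ramp : ∀ ω, rampL δ (fstar (X ω)) = if 0 ≤ φ ω then 2 else 0 := by
    intro ω
    simp only [hfstar_def]
    by_cases hx : X ω ∈ B
    · rw [if_pos hx, if_pos ((hmemB ω).1 hx), rampL_self hδ]
    · rw [if_neg hx, if_neg (fun hc => hx ((hmemB ω).2 hc)), rampL_neg_self hδ]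
  -- value of V'_L at fstar
  have hA1 : VLcvar P X A Y Δc S π γ δ fstar αtilde
      = (∫ ω, W ω * (1 - A ω) ∂P) + ∫ ω, (φ ω + |φ ω|) ∂P := by
    rw [hdecomp fstar hfstar_meas,
      hpull (fun x => rampL δ (fstar x)) ((measurable_rampL δ).comp hfstar_meas)
        (hramp_abs fstar)]
    congr 1
    refine integral_congr_ae (Filter.Eventually.of_forall fun ω => ?_)
    beta_reduce
    rw [hfstar_ramp ω]
    rcases le_or_gt 0 (φ ω) with h'|h'
    · rw [if_pos h', abs_of_nonneg h']; ring
    · rw [if_neg (not_le.mpr h'), abs_of_neg h']; ring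
  -- value of V'_L at ftilde
  have hA2 : VLcvar P X A Y Δc S π γ δ ftilde αtilde
      = (∫ ω, W ω * (1 - A ω) ∂P) + ∫ ω, rampL δ (ftilde (X ω)) * φ ω ∂P := by
    rw [hdecomp ftilde hftilde,
      hpull (fun x => rampL δ (ftilde x)) ((measurable_rampL δ).comp hftilde)
        (hramp_abs ftilde)]
  -- optimality forces the key a.e. identity
  have hφabs_int : Integrable (fun ω => |φ ω|) P := hφint.abs
  have hLφ_int : Integrable (fun ω => rampL δ (ftilde (X ω)) * φ ω) P := by
    refine Integrable.bdd_mul hφint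
      ((measurable_rampL δ).comp (hftilde.comp hX)).aestronglyMeasurable (c := 2) (Filter.Eventually.of_forall fun ω => ?_)
    rw [Real.norm_eq_abs]; exact hramp_abs ftilde (X ω)
  have hmax : ∫ ω, (φ ω + |φ ω|) ∂P ≤ ∫ ω, rampL δ (ftilde (X ω)) * φ ω ∂P := by
    have hcmp := hopt fstar hfstar_meas αtilde
    rw [hA1, hA2] at hcmp
    linarith
  have hle_pt : ∀ ω, rampL δ (ftilde (X ω)) * φ ω ≤ φ ω + |φ ω| := by
    intro ω
    rcases le_or_gt 0 (φ ω) with h'|h'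
    · rw [abs_of_nonneg h']
      nlinarith [rampL_le_two hδ (ftilde (X ω))]
    · rw [abs_of_neg h']
      nlinarith [rampL_nonneg hδ (ftilde (X ω))]
  have heq0 : (fun ω => φ ω + |φ ω| - rampL δ (ftilde (X ω)) * φ ω) =ᵐ[P] 0 := by
    have hsum_int' : Integrable (fun ω => φ ω + |φ ω|) P := hφint.add hφabs_int
    have hg0int : Integrable (fun ω => φ ω + |φ ω| - rampL δ (ftilde (X ω)) * φ ω) P :=
      hsum_int'.sub hLφ_int
    have hz : ∫ ω, (φ ω + |φ ω| - rampL δ (ftilde (X ω)) * φ ω) ∂P = 0 := by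
      rw [integral_sub hsum_int' hLφ_int]
      have hmono : ∫ ω, rampL δ (ftilde (X ω)) * φ ω ∂P ≤ ∫ ω, (φ ω + |φ ω|) ∂P :=
        integral_mono hLφ_int hsum_int' hle_pt
      linarith [hmax]
    exact (integral_eq_zero_iff_of_nonneg
      (fun ω => sub_nonneg.mpr (hle_pt ω)) hg0int).mp hz
  have hkey : ∀ᵐ ω ∂P, sgn (ftilde (X ω)) * φ ω = |φ ω| := by
    filter_upwards [heq0] with ω hω
    simp only [Pi.zero_apply] at hω
    have heq : rampL δ (ftilde (X ω)) * φ ω = φ ω + |φ ω| := by linarith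
    rcases lt_trichotomy (φ ω) 0 with h'|h'|h'
    · rw [abs_of_neg h'] at heq ⊢
      have hz : rampL δ (ftilde (X ω)) * φ ω = 0 := by linarith
      have hL : rampL δ (ftilde (X ω)) = 0 := by
        rcases mul_eq_zero.mp hz with h''|h''
        · exact h''
        · exact absurd h'' (ne_of_lt h')
      have hneg : ftilde (X ω) < 0 := by
        by_contra hc
        push_neg at hc
        have := one_le_rampL hδ hc
        linarith
      rw [sgn, if_neg (not_le.mpr hneg)]; ring
    · rw [h']; simp
    · rw [abs_of_pos h'] at heq ⊢
      have hL : rampL δ (ftilde (X ω)) = 2 :=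
        mul_right_cancel₀ (ne_of_gt h') (by linarith : rampL δ (ftilde (X ω)) * φ ω = 2 * φ ω)
      have hpos : 0 ≤ ftilde (X ω) := by
        by_contra hc
        push_neg at hc
        have := rampL_le_one hδ hc.le
        linarith
      rw [sgn, if_pos hpos]; ring
  -- V'_L(ftilde, αtilde) equals twice V'(sgn ∘ ftilde, αtilde)
  have hLφ_eq : ∫ ω, rampL δ (ftilde (X ω)) * φ ω ∂P = ∫ ω, (φ ω + |φ ω|) ∂P := by
    refine integral_congr_ae ?_
    filter_upwards [heq0] with ω hω
    simp only [Pi.zero_apply] at hω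
    linarith
  have hdstar_val : ∀ x, sgn (ftilde x) = 1 ∨ sgn (ftilde x) = -1 := fun x => sgn_val _
  have hdstar_meas : Measurable fun x => sgn (ftilde x) := measurable_sgn.comp hftilde
  have hB1 : 2 * Vcvar P X A Y Δc S π γ (fun x => sgn (ftilde x)) αtilde
      = VLcvar P X A Y Δc S π γ δ (fun x => δ * sgn (ftilde x)) αtilde :=
    hVc _ hdstar_val αtilde
  have hB2 : VLcvar P X A Y Δc S π γ δ (fun x => δ * sgn (ftilde x)) αtilde
      = (∫ ω, W ω * (1 - A ω) ∂P) + ∫ ω, (φ ω + |φ ω|) ∂P := by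
    rw [hdecomp (fun x => δ * sgn (ftilde x)) (measurable_const.mul hdstar_meas),
      hpull (fun x => rampL δ (δ * sgn (ftilde x)))
        ((measurable_rampL δ).comp (measurable_const.mul hdstar_meas))
        (hramp_abs (fun x => δ * sgn (ftilde x)))]
    congr 1
    refine integral_congr_ae ?_
    filter_upwards [hkey] with ω hω
    beta_reduce
    rcases le_or_gt 0 (ftilde (X ω)) with h'|h'
    · rw [sgn, if_pos h'] at hω ⊢
      rw [mul_one, rampL_self hδ]
      rw [one_mul] at hω
      rw [← hω]; ring
    · rw [sgn, if_neg (not_le.mpr h')] at hω ⊢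
      rw [mul_neg_one, rampL_neg_self hδ]
      rw [neg_one_mul] at hω
      linarith
  -- final chain
  have hfinal1 : 2 * Vcvar P X A Y Δc S π γ d α
      = VLcvar P X A Y Δc S π γ δ (fun x => δ * d x) α := hVc d hdval α
  have hfinal2 := hopt (fun x => δ * d x) (measurable_const.mul hd) α
  have hfinal3 : VLcvar P X A Y Δc S π γ δ ftilde αtilde
      = 2 * Vcvar P X A Y Δc S π γ (fun x => sgn (ftilde x)) αtilde := by
    rw [hA2, hLφ_eq, hB1, hB2]
  linarith
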